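/- The EGF F(t,u) of forests of rooted hypertrees, where t counts vertices and u counts weight, satisfies (ln(1+uF)/u)·exp(-F) = t; equivalently F(t,u) = rev_t( ln(1+ut)/u · exp(-t) ). -/

import Mathlib

noncomputable section

/-- Composition `f(a)` of formal power series (the substitution of `a` into `f`,
valid when `a` has zero constant term). -/
def pcomp {R : Type*} [CommRing R] (f a : PowerSeries R) : PowerSeries R :=
  PowerSeries.mk fun n =>
    PowerSeries.coeff n (∑ k ∈ Finset.range (n + 1),
      PowerSeries.C (PowerSeries.coeff k f) * a ^ k)

open PowerSeries Finset

variable {R : Type*} [CommRing R]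

lemma coeff_pcomp (f a : PowerSeries R) (n : ℕ) :
    coeff n (pcomp f a)
      = ∑ k ∈ range (n + 1), coeff k f * coeff n (a ^ k) := by
  simp [pcomp, coeff_mk, map_sum, coeff_C_mul]

lemma coeff_pow_of_lt {a : PowerSeries R} (ha : constantCoeff a = 0)
    {n k : ℕ} (h : n < k) : coeff n (a ^ k) = 0 := by
  have hd : (X : PowerSeries R) ^ k ∣ a ^ k :=
    pow_dvd_pow_of_dvd (X_dvd_iff.mpr ha) k
  exact X_pow_dvd_iff.mp hd n h

lemma coeff_pcomp_of_lt (f a : PowerSeries R) (ha : constantCoeff a = 0)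
    {n N : ℕ} (h : n < N) :
    coeff n (pcomp f a) = ∑ k ∈ range N, coeff k f * coeff n (a ^ k) := by
  rw [coeff_pcomp]
  refine Finset.sum_subset (Finset.range_subset_range.mpr h) ?_
  intro k _ hk
  rw [coeff_pow_of_lt ha (by simpa using hk), mul_zero]

lemma pcomp_add (f g a : PowerSeries R) :
    pcomp (f + g) a = pcomp f a + pcomp g a := by
  ext n; simp [coeff_pcomp, add_mul, Finset.sum_add_distrib]

lemma pcomp_neg (f a : PowerSeries R) : pcomp (-f) a = -pcomp f a := by
  ext n; simp [coeff_pcomp, Finset.sum_neg_distrib]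

lemma pcomp_sub (f g a : PowerSeries R) :
    pcomp (f - g) a = pcomp f a - pcomp g a := by
  rw [sub_eq_add_neg, pcomp_add, pcomp_neg, sub_eq_add_neg]

lemma pcomp_C_mul (r : R) (f a : PowerSeries R) :
    pcomp (C r * f) a = C r * pcomp f a := by
  ext n; simp [coeff_pcomp, coeff_C_mul, Finset.mul_sum, mul_assoc]

lemma pcomp_C (r : R) (a : PowerSeries R) : pcomp (C r) a = C r := by
  ext n
  rw [coeff_pcomp, Finset.sum_eq_single 0]
  · simp [coeff_C]
  · intro k _ hk; simp [coeff_C, hk]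
  · intro h; simp at h

lemma pcomp_one (a : PowerSeries R) : pcomp 1 a = 1 := by
  rw [← map_one (C), pcomp_C, map_one]

lemma pcomp_X (a : PowerSeries R) (ha : constantCoeff a = 0) :
    pcomp X a = a := by
  ext n
  rw [coeff_pcomp_of_lt _ _ ha (show n < n + 2 by omega), Finset.sum_eq_single 1]
  · simp
  · intro k _ hk; simp [coeff_X, hk]
  · intro h; simp at h

lemma pcomp_X_right (f : PowerSeries R) : pcomp f X = f := by
  ext n
  rw [coeff_pcomp, Finset.sum_eq_single n]
  · simp [X_pow_eq, coeff_monomial]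
  · intro k _ hk
    rw [X_pow_eq, coeff_monomial, if_neg (fun h => hk h.symm), mul_zero]
  · intro h; simp at h

lemma constantCoeff_pcomp (f a : PowerSeries R) :
    constantCoeff (pcomp f a) = constantCoeff f := by
  have := coeff_pcomp f a 0
  simpa using this

lemma coeff_one_pcomp (f a : PowerSeries R) :
    coeff 1 (pcomp f a) = coeff 1 f * coeff 1 a := by
  rw [coeff_pcomp]
  rw [show range 2 = {0, 1} by rfl]
  simp [coeff_one]

lemma coeff_eval₂ (a : PowerSeries R) (ha : constantCoeff a = 0)
    (p : Polynomial R) (n : ℕ) :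
    coeff n (p.eval₂ (C) a) = ∑ k ∈ range (n + 1), p.coeff k * coeff n (a ^ k) := by
  set N := max (n + 1) (p.natDegree + 1) with hN
  rw [Polynomial.eval₂_eq_sum_range' (n := N) (C)
      (lt_of_le_of_lt (Nat.le_of_lt_succ (Nat.lt_succ_of_le (le_refl _)))
        (lt_of_lt_of_le (Nat.lt_succ_self _) (le_max_right _ _))) a]
  rw [map_sum]
  simp_rw [coeff_C_mul]
  symm
  refine Finset.sum_subset (Finset.range_subset_range.mpr (le_max_left _ _)) ?_
  intro k _ hk
  rw [coeff_pow_of_lt ha (by simpa using hk), mul_zero]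

lemma coeff_pcomp_eq_eval₂ (f a : PowerSeries R) (ha : constantCoeff a = 0)
    {m n : ℕ} (h : m ≤ n) :
    coeff m (pcomp f a) = coeff m ((trunc (n + 1) f).eval₂ (C) a) := by
  rw [coeff_eval₂ a ha, coeff_pcomp]
  refine Finset.sum_congr rfl fun k hk => ?_
  rw [coeff_trunc, if_pos (by simp at hk; omega)]

lemma pcomp_mul (f g a : PowerSeries R) (ha : constantCoeff a = 0) :
    pcomp (f * g) a = pcomp f a * pcomp g a := by
  ext n
  rw [PowerSeries.coeff_mul]
  have h1 : ∀ p ∈ antidiagonal n,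
      coeff p.1 (pcomp f a) * coeff p.2 (pcomp g a)
        = coeff p.1 ((trunc (n+1) f).eval₂ (C) a) *
          coeff p.2 ((trunc (n+1) g).eval₂ (C) a) := by
    rintro ⟨i, j⟩ hij
    rw [HasAntidiagonal.mem_antidiagonal] at hij
    rw [coeff_pcomp_eq_eval₂ f a ha (show i ≤ n by omega),
      coeff_pcomp_eq_eval₂ g a ha (show j ≤ n by omega)]
  rw [Finset.sum_congr rfl h1, ← PowerSeries.coeff_mul, ← Polynomial.eval₂_mul,
    coeff_pcomp_eq_eval₂ (f*g) a ha (le_refl n), coeff_eval₂ a ha, coeff_eval₂ a ha]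
  refine Finset.sum_congr rfl fun k hk => ?_
  have hk' : k < n + 1 := by simpa using hk
  congr 1
  rw [coeff_trunc, if_pos hk', coeff_mul_eq_coeff_trunc_mul_trunc f g hk',
    ← Polynomial.coe_mul, Polynomial.coeff_coe]

lemma pcomp_pow (f a : PowerSeries R) (ha : constantCoeff a = 0) (k : ℕ) :
    pcomp (f ^ k) a = (pcomp f a) ^ k := by
  induction k with
  | zero => simp [pcomp_one]
  | succ k ih => rw [pow_succ, pcomp_mul _ _ _ ha, ih, pow_succ]

lemma pcomp_assoc (f a b : PowerSeries R)
    (ha : constantCoeff a = 0) (hb : constantCoeff b = 0) :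
    pcomp (pcomp f a) b = pcomp f (pcomp a b) := by
  ext n
  rw [coeff_pcomp, coeff_pcomp]
  calc ∑ j ∈ range (n+1), coeff j (pcomp f a) * coeff n (b ^ j)
      = ∑ j ∈ range (n+1), (∑ k ∈ range (n+1), coeff k f * coeff j (a ^ k))
          * coeff n (b ^ j) := by
        refine Finset.sum_congr rfl fun j hj => ?_
        rw [coeff_pcomp_of_lt f a ha (show j < n + 1 from Finset.mem_range.mp hj)]
    _ = ∑ k ∈ range (n+1), coeff k f *
          ∑ j ∈ range (n+1), coeff j (a ^ k) * coeff n (b ^ j) := by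
        simp_rw [Finset.sum_mul, Finset.mul_sum]
        rw [Finset.sum_comm]
        apply Finset.sum_congr rfl; intros; apply Finset.sum_congr rfl; intros; ring
    _ = ∑ k ∈ range (n+1), coeff k f * coeff n ((pcomp a b) ^ k) := by
        refine Finset.sum_congr rfl fun k _ => ?_
        rw [← coeff_pcomp, pcomp_pow _ _ hb]

lemma derivative_pcomp (f a : PowerSeries R) (ha : constantCoeff a = 0) :
    d⁄dX R (pcomp f a) = pcomp (d⁄dX R f) a * d⁄dX R a := by
  ext n
  rw [coeff_derivative, coeff_pcomp_of_lt f a ha (show n + 1 < n + 2 by omega),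
    PowerSeries.coeff_mul]
  have hR : ∑ p ∈ antidiagonal n,
      coeff p.1 (pcomp (d⁄dX R f) a) * coeff p.2 (d⁄dX R a)
      = ∑ k ∈ range (n+1), (coeff (k+1) f * (k+1)) * coeff n (a ^ k * d⁄dX R a) := by
    calc ∑ p ∈ antidiagonal n, coeff p.1 (pcomp (d⁄dX R f) a) * coeff p.2 (d⁄dX R a)
        = ∑ p ∈ antidiagonal n, (∑ k ∈ range (n+1),
            coeff k (d⁄dX R f) * coeff p.1 (a ^ k)) * coeff p.2 (d⁄dX R a) := by
          refine Finset.sum_congr rfl fun p hp => ?_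
          rw [HasAntidiagonal.mem_antidiagonal] at hp
          rw [coeff_pcomp_of_lt _ _ ha (show p.1 < n + 1 by omega)]
      _ = ∑ k ∈ range (n+1), coeff k (d⁄dX R f) *
            ∑ p ∈ antidiagonal n, coeff p.1 (a ^ k) * coeff p.2 (d⁄dX R a) := by
          simp_rw [Finset.sum_mul, Finset.mul_sum]
          rw [Finset.sum_comm]
          apply Finset.sum_congr rfl; intros; apply Finset.sum_congr rfl; intros; ring
      _ = ∑ k ∈ range (n+1), (coeff (k+1) f * (k+1)) * coeff n (a ^ k * d⁄dX R a) := by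
          refine Finset.sum_congr rfl fun k _ => ?_
          rw [coeff_derivative, ← PowerSeries.coeff_mul]
  rw [hR, Finset.sum_mul]
  rw [Finset.sum_range_succ']
  have h0 : coeff (n+1) (a ^ 0) = 0 := by
    simp [coeff_one]
  rw [show coeff 0 f * coeff (n+1) (a ^ 0) * (n+1 : R) = 0 by rw [h0]; ring, add_zero]
  refine Finset.sum_congr rfl fun k _ => ?_
  calc coeff (k+1) f * coeff (n+1) (a ^ (k+1)) * (n+1 : R)
      = coeff (k+1) f * coeff n (d⁄dX R (a ^ (k+1))) := by
        rw [coeff_derivative]; try push_cast; try ring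
    _ = coeff (k+1) f * ((k:R)+1) * coeff n (a ^ k * d⁄dX R a) := by
          rw [Derivation.leibniz_pow, Nat.add_sub_cancel, map_nsmul, nsmul_eq_mul,
            smul_eq_mul]
          push_cast; ring

/-- Coefficient ring `ℚ[[u]]`, `u` recording the weight grading. -/
abbrev Ru : Type := PowerSeries ℚ

/-- The weight variable `u`. -/
def uvar : Ru := PowerSeries.X

/-- `exp(t)` as a power series in `t` with coefficients in `ℚ[[u]]`. -/
def Eu : PowerSeries Ru := PowerSeries.exp Ru

/-- `ln(1+ut)/u = Σ_{n≥1} (-1)^{n+1} u^{n-1} tⁿ/n`. -/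
def Lgu : PowerSeries Ru :=
  PowerSeries.mk fun n => if n = 0 then 0 else ((-1 : ℚ) ^ (n + 1) / n) • uvar ^ (n - 1)



lemma pderiv_one {S : Type*} [CommRing S] : d⁄dX S (1 : PowerSeries S) = 0 := by
  rw [← map_one (C), derivative_C]

instance : CharZero Ru :=
  ⟨fun a b h => by
    have := congrArg (PowerSeries.constantCoeff) h
    simpa using this⟩

example : NoZeroSMulDivisors ℕ Ru := inferInstance
example : IsDomain (PowerSeries Ru) := inferInstance

lemma pderiv_mul {S : Type*} [CommRing S] (f g : PowerSeries S) :
    d⁄dX S (f * g) = f * d⁄dX S g + g * d⁄dX S f := by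
  show derivativeFun (f * g) = _
  rw [derivativeFun_mul, smul_eq_mul, smul_eq_mul]
  rfl

/-- `ln(1+t)` with coefficients in `Ru`. -/
def PLog : PowerSeries Ru :=
  PowerSeries.mk fun n => if n = 0 then 0 else algebraMap ℚ Ru ((-1) ^ (n + 1) / n)

/-- `1/(1+t)` as a geometric series. -/
def PGeom : PowerSeries Ru := PowerSeries.mk fun n => (-1 : Ru) ^ n

lemma geom_eq : (1 + X) * PGeom = (1 : PowerSeries Ru) := by
  ext n
  rw [add_mul, one_mul, map_add]
  cases n with
  | zero => simp [PGeom, coeff_mk, coeff_one]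
  | succ n =>
    rw [coeff_succ_X_mul]
    simp [PGeom, coeff_mk, coeff_one, pow_succ]

lemma dPLog : d⁄dX Ru PLog = PGeom := by
  ext n
  rw [coeff_derivative]
  simp only [PLog, PGeom, coeff_mk, if_neg (Nat.succ_ne_zero n)]
  have hn : ((n : Ru) + 1) = algebraMap ℚ Ru ((n : ℚ) + 1) := by
    push_cast; simp
  rw [hn, ← map_mul]
  have h2 : ((-1 : ℚ) ^ (n + 1 + 1) / ((n + 1 : ℕ) : ℚ)) * ((n : ℚ) + 1) = (-1 : ℚ) ^ n := by
    have h1 : ((n : ℚ) + 1) ≠ 0 := by positivity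
    push_cast
    field_simp
    ring
  rw [h2]
  simp

lemma dEu : d⁄dX Ru Eu = Eu := by
  ext n
  rw [coeff_derivative]
  simp only [Eu, coeff_exp]
  have hn : ((n : Ru) + 1) = algebraMap ℚ Ru ((n : ℚ) + 1) := by push_cast; simp
  rw [hn, ← map_mul]
  congr 1
  rw [Nat.factorial_succ]
  have h1 : ((n : ℚ) + 1) ≠ 0 := by positivity
  have h2 : ((n.factorial : ℚ)) ≠ 0 := by
    exact_mod_cast Nat.cast_ne_zero.mpr (Nat.factorial_ne_zero n)
  field_simp
  congr 1
  push_cast; field_simp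

lemma constantCoeff_Eu : constantCoeff Eu = 1 := by
  simp [Eu, constantCoeff_exp]

lemma constantCoeff_Em1 : constantCoeff (Eu - 1) = 0 := by
  simp [constantCoeff_Eu]

lemma logexp : pcomp PLog (Eu - 1) = (X : PowerSeries Ru) := by
  apply derivative.ext
  · rw [derivative_pcomp _ _ constantCoeff_Em1, dPLog]
    have hd : d⁄dX Ru (Eu - 1) = Eu := by
      rw [map_sub, dEu, pderiv_one, sub_zero]
    rw [hd, derivative_X]
    have hE : Eu = pcomp (1 + X) (Eu - 1) := by
      rw [pcomp_add, pcomp_one, pcomp_X _ constantCoeff_Em1]; ring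
    calc pcomp PGeom (Eu - 1) * Eu
        = pcomp PGeom (Eu - 1) * pcomp (1 + X) (Eu - 1) := by rw [← hE]
      _ = pcomp (PGeom * (1 + X)) (Eu - 1) := (pcomp_mul _ _ _ constantCoeff_Em1).symm
      _ = 1 := by rw [mul_comm PGeom, geom_eq, pcomp_one]
  · rw [constantCoeff_pcomp]
    simp [PLog, constantCoeff_X, coeff_mk]

lemma exp_mul_exp_neg : Eu * pcomp Eu (-X) = 1 := by
  have hx : constantCoeff (-X : PowerSeries Ru) = 0 := by simp
  apply derivative.ext
  · rw [pderiv_mul, derivative_pcomp _ _ hx, dEu]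
    have h1 : d⁄dX Ru (-X) = -1 := by rw [map_neg, derivative_X]
    rw [h1, pderiv_one]
    ring
  · rw [map_mul, constantCoeff_pcomp, constantCoeff_Eu, one_mul]
    simp

lemma coeff_pow_congr {A B : PowerSeries R} {n : ℕ}
    (hA : constantCoeff A = 0) (hB : constantCoeff B = 0)
    (hag : ∀ m < n, coeff m A = coeff m B) :
    ∀ k, 2 ≤ k → ∀ m ≤ n, coeff m (A ^ k) = coeff m (B ^ k) := by
  intro k hk
  induction k, hk using Nat.le_induction with
  | base =>
    intro m hm
    rw [pow_two, pow_two, PowerSeries.coeff_mul, PowerSeries.coeff_mul]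
    refine Finset.sum_congr rfl ?_
    rintro ⟨i, j⟩ hij
    rw [HasAntidiagonal.mem_antidiagonal] at hij
    by_cases hi : i = 0
    · subst hi
      simp only [coeff_zero_eq_constantCoeff, hA, hB, zero_mul]
    by_cases hj : j = 0
    · subst hj
      simp only [coeff_zero_eq_constantCoeff, hA, hB, mul_zero]
    rw [hag i (by omega), hag j (by omega)]
  | succ k hk2 ih =>
    intro m hm
    rw [pow_succ, pow_succ, PowerSeries.coeff_mul, PowerSeries.coeff_mul]
    refine Finset.sum_congr rfl ?_
    rintro ⟨i, j⟩ hij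
    rw [HasAntidiagonal.mem_antidiagonal] at hij
    by_cases hj : j = 0
    · subst hj
      simp only [coeff_zero_eq_constantCoeff, hA, hB, mul_zero]
    by_cases hi : i = 0
    · subst hi
      have hAk : constantCoeff (A ^ k) = 0 := by
        rw [map_pow, hA, zero_pow (by omega)]
      have hBk : constantCoeff (B ^ k) = 0 := by
        rw [map_pow, hB, zero_pow (by omega)]
      simp only [coeff_zero_eq_constantCoeff, hAk, hBk, zero_mul]
    rw [ih i (by omega), hag j (by omega)]

def wseq (Fs : PowerSeries Ru) (c : Ru) : ℕ → Ru
  | 0 => 0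
  | n + 1 =>
    c * ((if n = 0 then 1 else 0) -
      ∑ k ∈ (Finset.range (n + 2)).erase 1,
        PowerSeries.coeff k Fs *
          PowerSeries.coeff (n + 1)
            ((PowerSeries.mk fun m => if _h : m < n + 1 then wseq Fs c m else 0) ^ k))
  termination_by n => n
  decreasing_by exact _h

lemma wseq_zero (Fs : PowerSeries Ru) (c : Ru) : wseq Fs c 0 = 0 := by
  rw [wseq]

lemma pcomp_right_inv (Fs : PowerSeries Ru) (c : Ru)
    (h0 : constantCoeff Fs = 0) (hc : coeff 1 Fs * c = 1) :
    ∃ Wp : PowerSeries Ru, constantCoeff Wp = 0 ∧ pcomp Fs Wp = X := by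
  set W : PowerSeries Ru := PowerSeries.mk (wseq Fs c) with hWdef
  have hW0 : constantCoeff W = 0 := by
    rw [← coeff_zero_eq_constantCoeff_apply, hWdef, coeff_mk, wseq_zero]
  refine ⟨W, hW0, ?_⟩
  refine PowerSeries.ext fun n => ?_
  cases n with
  | zero =>
    rw [coeff_pcomp]
    simp [h0, coeff_one]
  | succ n =>
    set A : PowerSeries Ru :=
      PowerSeries.mk (fun m => if _h : m < n + 1 then wseq Fs c m else 0) with hAdef
    have hA0 : constantCoeff A = 0 := by
      rw [← coeff_zero_eq_constantCoeff_apply, hAdef, coeff_mk, dif_pos (Nat.succ_pos n),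
        wseq_zero]
    have hag : ∀ m < n + 1, coeff m W = coeff m A := by
      intro m hm
      rw [hWdef, hAdef, coeff_mk, coeff_mk, dif_pos hm]
    have hkey : ∀ k ∈ (Finset.range (n + 2)).erase 1,
        coeff k Fs * coeff (n + 1) (W ^ k)
          = coeff k Fs * coeff (n + 1) (A ^ k) := by
      intro k hk
      rw [Finset.mem_erase, Finset.mem_range] at hk
      by_cases hk0 : k = 0
      · subst hk0; rfl
      · rw [coeff_pow_congr hW0 hA0 hag k (by omega) (n + 1) le_rfl]
    have hmem : (1 : ℕ) ∈ Finset.range (n + 2) := by simp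
    rw [coeff_pcomp, ← Finset.add_sum_erase _ _ hmem, Finset.sum_congr rfl hkey, pow_one]
    have hWc : coeff (n + 1) W = c * ((if n = 0 then (1:Ru) else 0) -
        ∑ k ∈ (Finset.range (n + 2)).erase 1,
          coeff k Fs * coeff (n + 1) (A ^ k)) := by
      rw [hWdef, coeff_mk, wseq]
    rw [hWc, ← mul_assoc, hc, one_mul]
    have hrng : ∀ x y : Ru, (x - y) + y = x := fun x y => by ring
    rw [hrng, coeff_X]
    by_cases h : n = 0 <;> simp [h]

lemma constantCoeff_Lgu : constantCoeff Lgu = 0 := by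
  rw [← coeff_zero_eq_constantCoeff_apply]
  simp [Lgu, coeff_mk]

lemma CuLgu : C uvar * Lgu = pcomp PLog (C uvar * X) := by
  refine PowerSeries.ext fun n => ?_
  rw [coeff_C_mul, coeff_pcomp, Finset.sum_eq_single n]
  · have hp : (C uvar * X) ^ n = C (uvar ^ n) * X ^ n := by rw [mul_pow, map_pow]
    rw [hp, coeff_C_mul, coeff_X_pow, if_pos rfl, mul_one]
    cases n with
    | zero => simp [Lgu, PLog, coeff_mk]
    | succ m =>
      simp only [Lgu, PLog, coeff_mk, if_neg (Nat.succ_ne_zero m), Nat.add_sub_cancel]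
      rw [Algebra.smul_def, pow_succ]
      ring
  · intro k _ hk
    have hp : (C uvar * X) ^ k = C (uvar ^ k) * X ^ k := by rw [mul_pow, map_pow]
    rw [hp, coeff_C_mul, coeff_X_pow, if_neg (fun h => hk h.symm), mul_zero, mul_zero]
  · intro h; simp at h

/-- The EGF `F(t,u)` of forests of rooted hypertrees (`t` counting vertices, `u` the weight),
determined by the species equations `FH = (1/u)E_{≥1}(u·H)` and `H = X·E(FH)`, i.e.
`exp(u·H) = 1 + u·F` and `H = t·exp(F)`, satisfies `(ln(1+uF)/u)·exp(-F) = t`;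
equivalently `F = rev_t(ln(1+ut)/u · exp(-t))`. -/
theorem forests_rooted_hypertrees_egf
    (F H : PowerSeries Ru)
    (hF : PowerSeries.constantCoeff F = 0) (hH : PowerSeries.constantCoeff H = 0)
    (h1 : pcomp Eu (PowerSeries.C uvar * H) = 1 + PowerSeries.C uvar * F)
    (h2 : H = PowerSeries.X * pcomp Eu F) :
    pcomp Lgu F * pcomp Eu (-F) = PowerSeries.X ∧
    pcomp (Lgu * pcomp Eu (-PowerSeries.X)) F = PowerSeries.X ∧
    pcomp F (Lgu * pcomp Eu (-PowerSeries.X)) = PowerSeries.X := by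
  have hCuX0 : constantCoeff (C uvar * X) = 0 := by simp
  have hnegX0 : constantCoeff (-X : PowerSeries Ru) = 0 := by simp
  have huH0 : constantCoeff (C uvar * H) = 0 := by simp [hH]
  have hstep : pcomp (Eu - 1) (C uvar * H) = C uvar * F := by
    rw [pcomp_sub, pcomp_one, h1]; ring
  have hCA : pcomp Lgu F = H := by
    have hmul : C uvar * pcomp Lgu F = C uvar * H := by
      calc C uvar * pcomp Lgu F
          = pcomp (C uvar * Lgu) F := (pcomp_C_mul _ _ _).symm
        _ = pcomp (pcomp PLog (C uvar * X)) F := by rw [CuLgu]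
        _ = pcomp PLog (pcomp (C uvar * X) F) := pcomp_assoc _ _ _ hCuX0 hF
        _ = pcomp PLog (C uvar * F) := by rw [pcomp_C_mul, pcomp_X _ hF]
        _ = pcomp PLog (pcomp (Eu - 1) (C uvar * H)) := by rw [hstep]
        _ = pcomp (pcomp PLog (Eu - 1)) (C uvar * H) :=
            (pcomp_assoc _ _ _ constantCoeff_Em1 huH0).symm
        _ = pcomp X (C uvar * H) := by rw [logexp]
        _ = C uvar * H := pcomp_X _ huH0
    have hCne : (C uvar : PowerSeries Ru) ≠ 0 := by
      intro hcon
      have h2' := congrArg (constantCoeff) hcon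
      rw [constantCoeff_C, map_zero] at h2'
      exact PowerSeries.X_ne_zero (R := ℚ) (by simpa [uvar] using h2')
    exact mul_left_cancel₀ hCne hmul
  have hEneg : pcomp Eu (-F) = pcomp (pcomp Eu (-X)) F := by
    rw [pcomp_assoc _ _ _ hnegX0 hF, pcomp_neg, pcomp_X _ hF]
  have hprod : pcomp Eu F * pcomp Eu (-F) = 1 := by
    rw [hEneg, ← pcomp_mul _ _ _ hF, exp_mul_exp_neg, pcomp_one]
  have g1 : pcomp Lgu F * pcomp Eu (-F) = X := by
    rw [hCA, h2, mul_assoc, hprod, mul_one]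
  have g2 : pcomp (Lgu * pcomp Eu (-X)) F = X := by
    rw [pcomp_mul _ _ _ hF, ← hEneg]
    exact g1
  refine ⟨g1, g2, ?_⟩
  have h11 : coeff 1 F * coeff 1 (Lgu * pcomp Eu (-X)) = 1 := by
    have hco := congrArg (coeff 1) g2
    rw [coeff_one_pcomp] at hco
    simp only [coeff_one_X] at hco
    rw [mul_comm]
    exact hco
  obtain ⟨W, hW0, hFW⟩ := pcomp_right_inv F (coeff 1 (Lgu * pcomp Eu (-X))) hF h11
  have hGW : Lgu * pcomp Eu (-X) = W := by
    calc Lgu * pcomp Eu (-X)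
        = pcomp (Lgu * pcomp Eu (-X)) X := (pcomp_X_right _).symm
      _ = pcomp (Lgu * pcomp Eu (-X)) (pcomp F W) := by rw [hFW]
      _ = pcomp (pcomp (Lgu * pcomp Eu (-X)) F) W := (pcomp_assoc _ _ _ hF hW0).symm
      _ = pcomp X W := by rw [g2]
      _ = W := pcomp_X _ hW0
  rw [hGW]
  exact hFW
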